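/- Let k be a ring, R a finite free k-algebra of rank t with basis e_1,…,e_t, and let Y = Spec(R[y]/I) for an ideal I of the polynomial ring R[y] in variables y. Define ρ : R[y] → k[y_1,…,y_t] ⊗_k R by ρ(y) = Σ_j y_j ⊗ e_j and ρ(r) = 1 ⊗ r, and let I' ⊆ k[y_1,…,y_t] be the ideal generated by the components P_1,…,P_t (with respect to the basis e_1,…,e_t) of ρ(P) as P ranges over I. Then for every k-algebra A, R-algebra homomorphisms R[y]/I → A ⊗_k R correspond bijectively to k-algebra homomorphisms k[y_1,…,y_t]/I' → A, via f ↦ (f ⊗ id_R) ∘ ρ̄, where ρ̄ is the map induced by ρ on quotients. -/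

import Mathlib

open TensorProduct MvPolynomial

noncomputable section WeilAux

variable {k R A : Type*} [CommRing k] [CommRing R] [Algebra k R] [CommRing A] [Algebra k A]
variable {t : ℕ}

/-- The `j`-th basis component of an element of `R ⊗[k] A`. -/
def weilComp (b : Module.Basis (Fin t) k R) (j : Fin t) : R ⊗[k] A →ₗ[k] A :=
  TensorProduct.lift ((LinearMap.lsmul k A).comp (b.coord j))

lemma weilComp_tmul (b : Module.Basis (Fin t) k R) (j : Fin t) (r : R) (a : A) :
    weilComp b j (r ⊗ₜ[k] a) = b.coord j r • a := rfl

lemma sum_weilComp (b : Module.Basis (Fin t) k R) (x : R ⊗[k] A) :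
    ∑ j, (b j) ⊗ₜ[k] weilComp b j x = x := by
  induction x using TensorProduct.induction_on with
  | zero => simp [tmul_zero]
  | tmul r a =>
      have : ∀ j : Fin t, (b j) ⊗ₜ[k] weilComp b j (r ⊗ₜ[k] a)
          = (b.coord j r • b j) ⊗ₜ[k] a := by
        intro j
        rw [weilComp_tmul, smul_tmul]
      rw [Finset.sum_congr rfl fun j _ => this j, ← sum_tmul]
      congr 1
      simpa using b.sum_repr r
  | add x y hx hy =>
      simp only [map_add, tmul_add, Finset.sum_add_distrib, hx, hy]

lemma weilComp_eq_zero_iff (b : Module.Basis (Fin t) k R) (x : R ⊗[k] A) :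
    x = 0 ↔ ∀ j, weilComp b j x = 0 := by
  constructor
  · rintro rfl j; simp
  · intro h
    rw [← sum_weilComp b x]
    simp [h, tmul_zero]

lemma weilComp_map {B : Type*} [CommRing B] [Algebra k B]
    (b : Module.Basis (Fin t) k R) (f : B →ₐ[k] A) (j : Fin t) (x : R ⊗[k] B) :
    weilComp b j (Algebra.TensorProduct.map (AlgHom.id R R) f x) = f (weilComp b j x) := by
  induction x using TensorProduct.induction_on with
  | zero => simp
  | tmul r q => simp [weilComp_tmul, map_smul]
  | add x y hx hy => simp [map_add, hx, hy]

end WeilAux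

theorem stmt_16 (k R : Type*) [CommRing k] [CommRing R] [Algebra k R]
    (t : ℕ) (b : Module.Basis (Fin t) k R)
    (σ : Type*) (I : Ideal (MvPolynomial σ R))
    (ρ : MvPolynomial σ R →ₐ[R] R ⊗[k] MvPolynomial (σ × Fin t) k)
    (hρ : ρ = aeval (fun s => ∑ j, (b j) ⊗ₜ[k] (X (s, j))))
    (I' : Ideal (MvPolynomial (σ × Fin t) k))
    (hI' : I' = Ideal.span {q | ∃ P ∈ I, ∃ j : Fin t,
      q = TensorProduct.lift
            ((LinearMap.lsmul k (MvPolynomial (σ × Fin t) k)).comp (b.coord j)) (ρ P)})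
    (A : Type*) [CommRing A] [Algebra k A] :
    Set.BijOn
      (fun f : MvPolynomial (σ × Fin t) k →ₐ[k] A =>
        (Algebra.TensorProduct.map (AlgHom.id R R) f).comp ρ)
      {f | I' ≤ RingHom.ker f}
      {g : MvPolynomial σ R →ₐ[R] R ⊗[k] A | I ≤ RingHom.ker g} := by
  set G : (MvPolynomial (σ × Fin t) k →ₐ[k] A) → (MvPolynomial σ R →ₐ[R] R ⊗[k] A) :=
    fun f => (Algebra.TensorProduct.map (AlgHom.id R R) f).comp ρ with hG
  -- the key membership equivalence
  have hker : ∀ f : MvPolynomial (σ × Fin t) k →ₐ[k] A,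
      I' ≤ RingHom.ker f ↔ I ≤ RingHom.ker (G f) := by
    intro f
    rw [hI', Ideal.span_le]
    constructor
    · intro h P hP
      have hz : ∀ j, weilComp b j (G f P) = 0 := by
        intro j
        have : f (weilComp b j (ρ P)) = 0 := h ⟨P, hP, j, rfl⟩
        simpa [hG, weilComp_map] using this
      exact (weilComp_eq_zero_iff b _).2 hz
    · rintro h q ⟨P, hP, j, rfl⟩
      have hz : G f P = 0 := h hP
      have := (weilComp_eq_zero_iff b (G f P)).1 hz j
      exact (by simpa [hG, weilComp_map] using this : f (weilComp b j (ρ P)) = 0)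
  -- component of ρ (X s)
  have hρX : ∀ (s : σ) (j : Fin t),
      weilComp b j (ρ (X s)) = X (s, j) := by
    intro s j
    rw [hρ]
    simp only [aeval_X, map_sum, weilComp_tmul]
    rw [Finset.sum_eq_single j]
    · simp
    · intro i _ hij
      simp [Module.Basis.coord_apply, Module.Basis.repr_self, Finsupp.single_apply, hij]
    · simp
  refine ⟨fun f hf => (hker f).1 hf, ?_, ?_⟩
  · intro f₁ _ f₂ _ h
    apply MvPolynomial.algHom_ext
    rintro ⟨s, j⟩
    have h' : G f₁ (X s) = G f₂ (X s) := by rw [h]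
    have := congrArg (weilComp b j) h'
    simpa [hG, weilComp_map, hρX] using this
  · rintro g hg
    refine ⟨aeval (fun p : σ × Fin t => weilComp b p.2 (g (X p.1))), ?_, ?_⟩
    · apply (hker _).2
      have hGg : G (aeval (fun p : σ × Fin t => weilComp b p.2 (g (X p.1)))) = g := by
        apply MvPolynomial.algHom_ext
        intro s
        simp only [hG, AlgHom.comp_apply, hρ, aeval_X, map_sum,
          Algebra.TensorProduct.map_tmul, AlgHom.coe_id, id_eq]
        simpa using sum_weilComp b (g (X s))
      rw [hGg]; exact hg
    · apply MvPolynomial.algHom_ext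
      intro s
      simp only [hG, AlgHom.comp_apply, hρ, aeval_X, map_sum,
        Algebra.TensorProduct.map_tmul, AlgHom.coe_id, id_eq]
      simpa using sum_weilComp b (g (X s))
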